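/- If p_0 > 0, p_n ≥ 0, ∑ p_n = P < ∞, and the comparison sequence (k_n) defined by δ_{n,0} = ∑_{ν=0}^n k_ν p_{n−ν} (i.e., k is the convolution inverse of p) satisfies ∑ |k_n| < ∞, then the Nörlund method (N,p) is trivial: a sequence is (N,p)-convergent to σ if and only if it converges to σ in the ordinary sense. -/

import Mathlib

open Filter Finset

/-- `s` is (N,p)-convergent to `σ`. -/
def NorlundConv (p s : ℕ → ℝ) (σ : ℝ) : Prop :=
  Tendsto (fun m => (∑ n ∈ Finset.range (m + 1), p (m - n) * s n) /
    (∑ k ∈ Finset.range (m + 1), p k)) atTop (nhds σ)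


lemma conv_null (a b : ℕ → ℝ) (ha : Summable fun n => |a n|)
    (hb : Tendsto b atTop (nhds 0)) :
    Tendsto (fun n => ∑ ν ∈ Finset.range (n + 1), a ν * b (n - ν)) atTop (nhds 0) := by
  have habs : Tendsto (fun n => |b n|) atTop (nhds 0) := by
    have := hb.abs; simpa using this
  obtain ⟨B0, hB0⟩ := habs.bddAbove_range
  set B : ℝ := max B0 0 + 1 with hBdef
  have hBpos : 0 < B := by positivity
  have hbB : ∀ n, |b n| ≤ B := fun n => by
    have h1 : |b n| ≤ B0 := hB0 (Set.mem_range_self n)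
    have := le_max_left B0 (0:ℝ)
    simp only [hBdef]; linarith
  set A : ℝ := ∑' n, |a n| with hAdef
  have hA0 : 0 ≤ A := tsum_nonneg fun n => abs_nonneg _
  have hpart : ∀ m, ∑ i ∈ Finset.range m, |a i| ≤ A :=
    fun m => ha.sum_le_tsum _ (fun i _ => abs_nonneg _)
  rw [NormedAddCommGroup.tendsto_nhds_zero]
  intro ε hε
  set δ1 : ℝ := ε / (2 * (B + 1)) with hδ1def
  set δ2 : ℝ := ε / (2 * (A + 1)) with hδ2def
  have hδ1 : 0 < δ1 := by positivity
  have hδ2 : 0 < δ2 := by positivity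
  -- choose N1 : tail of a beyond N1 is small
  have hpartial : Tendsto (fun m => ∑ i ∈ Finset.range m, |a i|) atTop (nhds A) :=
    ha.hasSum.tendsto_sum_nat
  have : ∀ᶠ m in atTop, A - ∑ i ∈ Finset.range m, |a i| < δ1 := by
    have := hpartial.eventually (eventually_gt_nhds (by linarith : A - δ1 < A))
    filter_upwards [this] with m hm; linarith
  obtain ⟨N1, hN1⟩ := this.exists
  -- choose M : |b| small beyond M
  obtain ⟨M, hM⟩ := (Metric.tendsto_atTop.1 hb δ2 hδ2)
  have hMb : ∀ m ≥ M, |b m| ≤ δ2 := by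
    intro m hm; have := hM m hm; rw [Real.dist_eq, sub_zero] at this; linarith
  filter_upwards [eventually_ge_atTop (N1 + M)] with n hn
  have hle : N1 ≤ n + 1 := by omega
  have hsplit : ∑ ν ∈ Finset.range (n + 1), a ν * b (n - ν)
      = (∑ ν ∈ Finset.range N1, a ν * b (n - ν))
        + ∑ ν ∈ Finset.Ico N1 (n + 1), a ν * b (n - ν) := by
    rw [Finset.range_eq_Ico, ← Finset.sum_Ico_consecutive _ (Nat.zero_le _) hle,
      ← Finset.range_eq_Ico]
  have e1 : |∑ ν ∈ Finset.range N1, a ν * b (n - ν)| ≤ A * δ2 := by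
    calc |∑ ν ∈ Finset.range N1, a ν * b (n - ν)|
        ≤ ∑ ν ∈ Finset.range N1, |a ν * b (n - ν)| := Finset.abs_sum_le_sum_abs _ _
      _ ≤ ∑ ν ∈ Finset.range N1, |a ν| * δ2 := by
          apply Finset.sum_le_sum
          intro ν hν
          rw [abs_mul]
          apply mul_le_mul_of_nonneg_left _ (abs_nonneg _)
          apply hMb
          simp only [Finset.mem_range] at hν
          omega
      _ = (∑ ν ∈ Finset.range N1, |a ν|) * δ2 := by rw [Finset.sum_mul]
      _ ≤ A * δ2 := mul_le_mul_of_nonneg_right (hpart N1) hδ2.le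
  have e2 : |∑ ν ∈ Finset.Ico N1 (n + 1), a ν * b (n - ν)| ≤ δ1 * B := by
    have hT : ∑ ν ∈ Finset.Ico N1 (n + 1), |a ν| ≤ δ1 := by
      have : ∑ ν ∈ Finset.Ico N1 (n + 1), |a ν|
          = ∑ ν ∈ Finset.range (n + 1), |a ν| - ∑ ν ∈ Finset.range N1, |a ν| := by
        rw [Finset.sum_Ico_eq_sub _ hle]
      have := hpart (n + 1)
      linarith [this, hN1]
    calc |∑ ν ∈ Finset.Ico N1 (n + 1), a ν * b (n - ν)|
        ≤ ∑ ν ∈ Finset.Ico N1 (n + 1), |a ν * b (n - ν)| := Finset.abs_sum_le_sum_abs _ _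
      _ ≤ ∑ ν ∈ Finset.Ico N1 (n + 1), |a ν| * B := by
          apply Finset.sum_le_sum; intro ν _
          rw [abs_mul]; exact mul_le_mul_of_nonneg_left (hbB _) (abs_nonneg _)
      _ = (∑ ν ∈ Finset.Ico N1 (n + 1), |a ν|) * B := by rw [Finset.sum_mul]
      _ ≤ δ1 * B := mul_le_mul_of_nonneg_right hT hBpos.le
  have key : ‖∑ ν ∈ Finset.range (n + 1), a ν * b (n - ν)‖ ≤ A * δ2 + δ1 * B := by
    rw [hsplit, Real.norm_eq_abs]
    exact (abs_add_le _ _).trans (add_le_add e1 e2)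
  have h1 : δ2 * (A + 1) = ε / 2 := by rw [hδ2def]; field_simp
  have h2 : δ1 * (B + 1) = ε / 2 := by rw [hδ1def]; field_simp
  nlinarith [key, hδ1, hδ2]

lemma coeff_mk_mul (f g : ℕ → ℝ) (n : ℕ) :
    PowerSeries.coeff n (PowerSeries.mk f * PowerSeries.mk g)
      = ∑ ν ∈ Finset.range (n + 1), f ν * g (n - ν) := by
  rw [PowerSeries.coeff_mul, Finset.Nat.sum_antidiagonal_eq_sum_range_succ_mk]
  simp

lemma reflect_conv (f g : ℕ → ℝ) (m : ℕ) :
    ∑ n ∈ Finset.range (m + 1), f (m - n) * g n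
      = ∑ ν ∈ Finset.range (m + 1), f ν * g (m - ν) := by
  rw [← Finset.sum_range_reflect (fun ν => f ν * g (m - ν)) (m + 1)]
  apply Finset.sum_congr rfl
  intro n hn
  simp only [Finset.mem_range] at hn
  have h1 : m + 1 - 1 - n = m - n := by omega
  have h2 : m - (m - n) = n := by omega
  rw [h1, h2]

theorem norlund_trivial_of_summable_inverse (p k : ℕ → ℝ)
    (hp0 : 0 < p 0) (hpn : ∀ n, 0 ≤ p n) (hP : Summable p)
    (hk : ∀ n, (if n = 0 then (1 : ℝ) else 0) =
      ∑ ν ∈ Finset.range (n + 1), k ν * p (n - ν))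
    (hksum : Summable fun n => |k n|) :
    ∀ (s : ℕ → ℝ) (σ : ℝ), NorlundConv p s σ ↔ Tendsto s atTop (nhds σ) := by
  have hpabs : Summable fun n => |p n| := by
    have : (fun n => |p n|) = p := funext fun n => abs_of_nonneg (hpn n)
    rwa [this]
  set P : ℕ → ℝ := fun m => ∑ i ∈ Finset.range (m + 1), p i with hPdef
  have hPpos : ∀ m, 0 < P m := fun m =>
    Finset.sum_pos' (fun i _ => hpn i) ⟨0, Finset.mem_range.2 (Nat.succ_pos m), hp0⟩
  set L : ℝ := ∑' n, p n with hLdef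
  have hLpos : 0 < L := lt_of_lt_of_le hp0 (hP.le_tsum 0 fun i _ => hpn i)
  have hPtend : Tendsto P atTop (nhds L) := by
    have h1 : Tendsto (fun m => ∑ i ∈ Finset.range m, p i) atTop (nhds L) :=
      hP.hasSum.tendsto_sum_nat
    exact h1.comp (tendsto_add_atTop_nat 1)
  -- power series setup
  have hKF : PowerSeries.mk k * PowerSeries.mk p = 1 := by
    ext n
    rw [coeff_mk_mul, PowerSeries.coeff_one]
    exact (hk n).symm
  have hinv : ∀ (g : ℕ → ℝ) (n : ℕ),
      g n = ∑ ν ∈ Finset.range (n + 1), k ν *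
        (∑ j ∈ Finset.range (n - ν + 1), p j * g (n - ν - j)) := by
    intro g n
    have h1 : PowerSeries.mk k * (PowerSeries.mk p * PowerSeries.mk g)
        = PowerSeries.mk g := by rw [← mul_assoc, hKF, one_mul]
    have h2 := congrArg (PowerSeries.coeff n) h1
    rw [PowerSeries.coeff_mk] at h2
    rw [PowerSeries.coeff_mul, Finset.Nat.sum_antidiagonal_eq_sum_range_succ_mk] at h2
    rw [← h2]
    apply Finset.sum_congr rfl
    intro ν _
    rw [PowerSeries.coeff_mk, coeff_mk_mul]
  intro s σ
  constructor
  · -- Tauberian direction: NorlundConv → ordinary convergence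
    intro h
    set u : ℕ → ℝ := fun m => ∑ n ∈ Finset.range (m + 1), p (m - n) * s n with hudef
    have hu : ∀ m, u m = ∑ j ∈ Finset.range (m + 1), p j * s (m - j) :=
      fun m => reflect_conv p s m
    have ht : Tendsto (fun m => u m / P m) atTop (nhds σ) := h
    -- g m := u m - σ * P m tends to 0
    have hg : Tendsto (fun m => u m - σ * P m) atTop (nhds 0) := by
      have h1 : Tendsto (fun m => P m * (u m / P m - σ)) atTop (nhds (L * (σ - σ))) :=
        hPtend.mul (ht.sub_const σ)
      have h2 : (fun m => P m * (u m / P m - σ)) = fun m => u m - σ * P m := by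
        funext m
        field_simp [(hPpos m).ne']
      rw [h2] at h1
      simpa using h1
    -- s n = σ + ∑ k ν * (u (n-ν) - σ P (n-ν))
    have hs : ∀ n, s n = σ + ∑ ν ∈ Finset.range (n + 1), k ν * (u (n - ν) - σ * P (n - ν)) := by
      intro n
      have h1 := hinv s n
      have h2 := hinv (fun _ => (1 : ℝ)) n
      simp only [mul_one] at h2
      calc s n = ∑ ν ∈ Finset.range (n + 1), k ν *
            (∑ j ∈ Finset.range (n - ν + 1), p j * s (n - ν - j)) := h1
        _ = ∑ ν ∈ Finset.range (n + 1), (k ν * (u (n - ν) - σ * P (n - ν))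
              + σ * (k ν * P (n - ν))) := by
            apply Finset.sum_congr rfl
            intro ν _
            rw [hu (n - ν)]
            ring
        _ = (∑ ν ∈ Finset.range (n + 1), k ν * (u (n - ν) - σ * P (n - ν)))
              + σ * ∑ ν ∈ Finset.range (n + 1), k ν * P (n - ν) := by
            rw [Finset.sum_add_distrib, Finset.mul_sum]
        _ = σ + ∑ ν ∈ Finset.range (n + 1), k ν * (u (n - ν) - σ * P (n - ν)) := by
            rw [← h2]; ring
    have hconv := conv_null k (fun m => u m - σ * P m) hksum hg
    have : Tendsto s atTop (nhds (σ + 0)) := by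
      have heq : s = fun n => σ + ∑ ν ∈ Finset.range (n + 1),
          k ν * (u (n - ν) - σ * P (n - ν)) := funext hs
      rw [heq]
      exact tendsto_const_nhds.add hconv
    simpa using this
  · -- regularity direction
    intro h
    have he : Tendsto (fun n => s n - σ) atTop (nhds 0) := by
      simpa using h.sub_const σ
    have hc := conv_null p (fun n => s n - σ) hpabs he
    unfold NorlundConv
    have heq : ∀ m, (∑ n ∈ Finset.range (m + 1), p (m - n) * s n)
        = σ * P m + ∑ ν ∈ Finset.range (m + 1), p ν * (s (m - ν) - σ) := by
      intro m
      rw [reflect_conv p s m]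
      rw [hPdef]
      simp only [Finset.mul_sum, ← Finset.sum_add_distrib]
      apply Finset.sum_congr rfl
      intro ν _
      ring
    have h1 : Tendsto (fun m => (σ * P m + ∑ ν ∈ Finset.range (m + 1),
        p ν * (s (m - ν) - σ)) / P m) atTop (nhds ((σ * L + 0) / L)) :=
      ((hPtend.const_mul σ).add hc).div hPtend hLpos.ne'
    have h2 : (σ * L + 0) / L = σ := by field_simp; ring
    rw [h2] at h1
    convert h1 using 2 with m
    rw [heq m]
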